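/- Let X be a set with a designated point r and binary relations R, R_l, R_r on X, let Y be a set, and let p ⊆ X×Y. Assume: (i) R_l and R_r are partial functions, i.e., x R_l y and x R_l y' imply y = y', and likewise for R_r; (ii) for all m, t: if r R m and m R_r t then there is m' with r R m' and m' R_l t; (iii) there is m with r R m; (iv) for every m with r R m there exist b ∈ Y and t, t' ∈ X with m R_l t, m R_r t', (t,b) ∉ p and (t',b) ∈ p; (v) for every m with r R m, every b ∈ Y and every t with m R_l t and (t,b) ∈ p, there is t' with m R_r t' and (t',b) ∈ p. Then X is infinite. -/

import Mathlib

/-- Auxiliary state for the recursive construction in `stmt11`. -/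
structure Stmt11St (X Y : Type*) where
  m : X
  t : X
  s : X
  b : Y
  bs : List Y

/-- Key lemma for the failure of the product fmp for `Saw × S5`: under the Saw frame
conditions (i)–(ii) on a frame rooted at `r` and the truth conditions (iii)–(v) of
`φ = ◇⊤ ∧ □◇_{S5}(◇_l ¬p ∧ ◇_r p) ∧ □□_{S5}(◇_l p → ◇_r p)` at `(r, s)` in the product
with an S5-cluster over `Y` (with valuation `p`), the domain `X` must be infinite. -/
theorem stmt11 {X Y : Type*} (r : X) (R Rl Rr : X → X → Prop) (p : Set (X × Y))
    (hfl : ∀ x y y', Rl x y → Rl x y' → y = y')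
    (hfr : ∀ x y y', Rr x y → Rr x y' → y = y')
    (hexp : ∀ m t, R r m → Rr m t → ∃ m', R r m' ∧ Rl m' t)
    (hne : ∃ m, R r m)
    (hsat : ∀ m, R r m → ∃ (b : Y) (t t' : X),
      Rl m t ∧ Rr m t' ∧ (t, b) ∉ p ∧ (t', b) ∈ p)
    (hmono : ∀ m (b : Y) t, R r m → Rl m t → (t, b) ∈ p →
      ∃ t', Rr m t' ∧ (t', b) ∈ p) :
    Infinite X := by
  classical
  set Good : Stmt11St X Y → Prop := fun q =>
    R r q.m ∧ Rl q.m q.t ∧ Rr q.m q.s ∧ (q.t, q.b) ∉ p ∧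
    (∀ c ∈ q.bs, (q.t, c) ∈ p) ∧ (q.s, q.b) ∈ p ∧ (∀ c ∈ q.bs, (q.s, c) ∈ p)
    with hGood
  -- base state
  obtain ⟨m0, hm0⟩ := hne
  obtain ⟨b0, t0, t0', ht0, ht0', hnp0, hp0⟩ := hsat m0 hm0
  have hbase : Good ⟨m0, t0, t0', b0, []⟩ := by
    refine ⟨hm0, ht0, ht0', hnp0, ?_, hp0, ?_⟩ <;> simp
  -- step
  have step : ∀ q : {q : Stmt11St X Y // Good q}, ∃ q' : {q : Stmt11St X Y // Good q},
      q'.1.bs = q.1.b :: q.1.bs ∧ q'.1.t = q.1.s := by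
    rintro ⟨q, hm, ht, hs, hnp, htl, hsp, hsl⟩
    obtain ⟨m', hm', hlm'⟩ := hexp q.m q.s hm hs
    obtain ⟨b', t1, t1', ht1, ht1', hnp1, hp1⟩ := hsat m' hm'
    have ht1eq : t1 = q.s := hfl m' t1 q.s ht1 hlm'
    subst ht1eq
    refine ⟨⟨⟨m', q.s, t1', b', q.b :: q.bs⟩, hm', hlm', ht1', hnp1, ?_, hp1, ?_⟩, rfl, rfl⟩
    · intro c hc
      rcases List.mem_cons.mp hc with h | h
      · exact h ▸ hsp
      · exact hsl c h
    · intro c hc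
      have hcin : (q.s, c) ∈ p := by
        rcases List.mem_cons.mp hc with h | h
        · exact h ▸ hsp
        · exact hsl c h
      obtain ⟨t'', ht'', hp''⟩ := hmono m' c q.s hm' hlm' hcin
      have : t'' = t1' := hfr m' t'' t1' ht'' ht1'
      exact this ▸ hp''
  choose g hg1 hg2 using step
  set f : ℕ → {q : Stmt11St X Y // Good q} := fun n => g^[n] ⟨⟨m0, t0, t0', b0, []⟩, hbase⟩
    with hf
  have hfsucc : ∀ n, f (n + 1) = g (f n) := by
    intro n
    simp [hf, Function.iterate_succ_apply']
  -- membership lemma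
  have hmem : ∀ i n, (f i).1.b ∈ (f (i + n + 1)).1.bs := by
    intro i n
    induction n with
    | zero =>
      rw [hfsucc i, hg1]
      exact List.mem_cons_self
    | succ n ih =>
      have : f (i + (n + 1) + 1) = g (f (i + n + 1)) := hfsucc (i + n + 1)
      rw [this, hg1]
      exact List.mem_cons_of_mem _ ih
  have hmemlt : ∀ i j, i < j → (f i).1.b ∈ (f j).1.bs := by
    intro i j hij
    obtain ⟨n, rfl⟩ : ∃ n, j = i + n + 1 := ⟨j - i - 1, by omega⟩
    exact hmem i n
  have hne' : ∀ i j, i < j → (f i).1.m ≠ (f j).1.m := by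
    intro i j hij heq
    obtain ⟨_, hti, _, hnpi, _, _, _⟩ := (f i).2
    obtain ⟨_, htj, _, _, htlj, _, _⟩ := (f j).2
    have hteq : (f i).1.t = (f j).1.t :=
      hfl (f j).1.m _ _ (heq ▸ hti) htj
    exact hnpi (hteq ▸ htlj (f i).1.b (hmemlt i j hij))
  exact Infinite.of_injective (fun n => (f n).1.m) (by
    intro i j h
    by_contra hij
    rcases lt_or_gt_of_ne hij with hlt | hlt
    · exact hne' i j hlt h
    · exact hne' j i hlt h.symm)
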